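/- If a rotationally asymmetric configuration of distinct points on a circle has two confused leaders, then the first clockwise neighbors of the two confused leaders are not antipodal to each other. -/

import Mathlib

open Real

/-- Normalize a real number into `[0, 2π)` (representing an angle on the circle). -/
noncomputable def norm2pi (x : ℝ) : ℝ := (2 * π) * Int.fract (x / (2 * π))

/-- Clockwise angular distance from `a` to `b`, in `[0, 2π)`. -/
noncomputable def cwAngle (a b : ℝ) : ℝ := norm2pi (b - a)

/-- A configuration: a finite set of angles, all lying in `[0, 2π)`. -/
def OnCircle (s : Finset ℝ) : Prop := ∀ x ∈ s, 0 ≤ x ∧ x < 2 * π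

/-- Rotation of a configuration by angle `θ`. -/
noncomputable def rotConf (s : Finset ℝ) (θ : ℝ) : Finset ℝ :=
  s.image (fun x => norm2pi (x + θ))

/-- Rotational asymmetry: no nontrivial rotation preserves the configuration. -/
def RotAsym (s : Finset ℝ) : Prop := ∀ θ ∈ Set.Ioo 0 (2 * π), rotConf s θ ≠ s

/-- The clockwise gap (angle) sequence of the point `r` in configuration `s`:
consecutive clockwise angular gaps starting at `r`. -/
noncomputable def angleSeq (s : Finset ℝ) (r : ℝ) : List ℝ :=
  let l := ((s.erase r).image (fun x => cwAngle r x)).sort (· ≤ ·)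
  List.zipWith (fun u v => u - v) (l ++ [2 * π]) (0 :: l)

/-- Strict lexicographic order on lists of reals. -/
def ListLexLt (l₁ l₂ : List ℝ) : Prop := List.Lex (· < ·) l₁ l₂

/-- `r` is the true leader of `s`: its angle sequence is lexicographically strictly
smaller than that of every other point. -/
def IsTrueLeader (s : Finset ℝ) (r : ℝ) : Prop :=
  r ∈ s ∧ ∀ x ∈ s, x ≠ r → ListLexLt (angleSeq s r) (angleSeq s x)

/-- The antipodal position of a point `r`. -/
noncomputable def antip (r : ℝ) : ℝ := norm2pi (r + π)

/-- The configuration as seen from `r` assuming its antipodal position is empty. -/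
noncomputable def confC0 (s : Finset ℝ) (r : ℝ) : Finset ℝ := s.erase (antip r)

/-- The configuration as seen from `r` assuming its antipodal position is occupied. -/
noncomputable def confC1 (s : Finset ℝ) (r : ℝ) : Finset ℝ := insert (antip r) s

/-- A confused leader: both possibilities `C₀(r)` and `C₁(r)` are rotationally
asymmetric, and `r` is the true leader in exactly one of them. -/
def ConfusedLeader (s : Finset ℝ) (r : ℝ) : Prop :=
  r ∈ s ∧ RotAsym (confC0 s r) ∧ RotAsym (confC1 s r) ∧
    Xor' (IsTrueLeader (confC0 s r) r) (IsTrueLeader (confC1 s r) r)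

/-- A sure leader: `r` is the true leader in every possible (rotationally
asymmetric) configuration among `C₀(r)`, `C₁(r)`. -/
def SureLeader (s : Finset ℝ) (r : ℝ) : Prop :=
  r ∈ s ∧ (RotAsym (confC0 s r) → IsTrueLeader (confC0 s r) r) ∧
    (RotAsym (confC1 s r) → IsTrueLeader (confC1 s r) r)

/-- An expected leader is a sure leader or a confused leader. -/
def ExpectedLeader (s : Finset ℝ) (r : ℝ) : Prop := SureLeader s r ∨ ConfusedLeader s r

/-- `r'` is the first clockwise neighbor of `r` in `s`. -/
def IsCwNeighbor (s : Finset ℝ) (r r' : ℝ) : Prop :=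
  r' ∈ s ∧ r' ≠ r ∧ ∀ x ∈ s, x ≠ r → cwAngle r r' ≤ cwAngle r x


-- ===== auxiliary development =====








lemma norm2pi_nonneg (x : ℝ) : 0 ≤ norm2pi x :=
  mul_nonneg Real.two_pi_pos.le (Int.fract_nonneg _)

lemma norm2pi_lt (x : ℝ) : norm2pi x < 2 * π := by
  have := Int.fract_lt_one (x / (2 * π))
  calc norm2pi x < 2 * π * 1 := by
        exact mul_lt_mul_of_pos_left this Real.two_pi_pos
    _ = 2 * π := mul_one _

lemma norm2pi_eq_self {x : ℝ} (h0 : 0 ≤ x) (h1 : x < 2 * π) : norm2pi x = x := by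
  unfold norm2pi
  rw [Int.fract_eq_self.mpr ⟨div_nonneg h0 Real.two_pi_pos.le, (div_lt_one Real.two_pi_pos).mpr h1⟩]
  field_simp

lemma norm2pi_add_int (x : ℝ) (k : ℤ) : norm2pi (x + 2 * π * k) = norm2pi x := by
  unfold norm2pi
  rw [show (x + 2 * π * k) / (2 * π) = x / (2*π) + k by field_simp, Int.fract_add_intCast]

lemma norm2pi_sub_floor (x : ℝ) : ∃ k : ℤ, norm2pi x = x + 2 * π * k := by
  refine ⟨-⌊x / (2*π)⌋, ?_⟩
  unfold norm2pi Int.fract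
  push_cast
  field_simp
  ring

lemma norm2pi_add_left (x y : ℝ) : norm2pi (norm2pi x + y) = norm2pi (x + y) := by
  obtain ⟨k, hk⟩ := norm2pi_sub_floor x
  rw [hk, show x + 2*π*k + y = (x + y) + 2*π*k by ring, norm2pi_add_int]

lemma norm2pi_eq_zero_iff {x : ℝ} : norm2pi x = 0 ↔ ∃ k : ℤ, x = 2 * π * k := by
  constructor
  · intro h
    obtain ⟨k, hk⟩ := norm2pi_sub_floor x
    exact ⟨-k, by push_cast; linarith [hk.symm.trans h]⟩
  · rintro ⟨k, rfl⟩
    rw [show 2*π*(k:ℝ) = 0 + 2*π*k by ring, norm2pi_add_int, norm2pi_eq_self le_rfl Real.two_pi_pos]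

lemma norm2pi_add_two_pi (x : ℝ) : norm2pi (x + 2*π) = norm2pi x := by
  rw [show x + 2*π = x + 2*π*((1:ℤ):ℝ) by push_cast; ring, norm2pi_add_int]

lemma norm2pi_two_pi : norm2pi (2 * π) = 0 := by
  rw [norm2pi_eq_zero_iff]; exact ⟨1, by push_cast; ring⟩

-- cwAngle basics
lemma cw_nonneg (a b : ℝ) : 0 ≤ cwAngle a b := norm2pi_nonneg _
lemma cw_lt (a b : ℝ) : cwAngle a b < 2 * π := norm2pi_lt _

lemma cw_eq_zero_iff {a b : ℝ} (ha0 : 0 ≤ a) (ha1 : a < 2*π) (hb0 : 0 ≤ b) (hb1 : b < 2*π) :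
    cwAngle a b = 0 ↔ a = b := by
  unfold cwAngle
  rw [norm2pi_eq_zero_iff]
  constructor
  · rintro ⟨k, hk⟩
    have hk0 : k = 0 := by
      by_contra h
      rcases lt_or_gt_of_ne h with h' | h'
      · have hk1 : k ≤ -1 := by omega
        have : (k:ℝ) ≤ -1 := by exact_mod_cast hk1
        nlinarith [pi_pos]
      · have : (1:ℝ) ≤ (k:ℝ) := by exact_mod_cast h'
        nlinarith [pi_pos]
    rw [hk0] at hk; push_cast at hk; linarith
  · rintro rfl; exact ⟨0, by push_cast; ring⟩

lemma cw_pos {a b : ℝ} (ha0 : 0 ≤ a) (ha1 : a < 2*π) (hb0 : 0 ≤ b) (hb1 : b < 2*π)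
    (h : a ≠ b) : 0 < cwAngle a b :=
  lt_of_le_of_ne (cw_nonneg a b) (fun h' => h ((cw_eq_zero_iff ha0 ha1 hb0 hb1).mp h'.symm))

lemma cw_total {a b : ℝ} (ha0 : 0 ≤ a) (ha1 : a < 2*π) (hb0 : 0 ≤ b) (hb1 : b < 2*π)
    (h : a ≠ b) : cwAngle a b + cwAngle b a = 2 * π := by
  rcases lt_or_gt_of_ne h with h' | h'
  · have h1 : cwAngle a b = b - a := norm2pi_eq_self (by linarith) (by linarith)
    have h2 : cwAngle b a = a - b + 2*π := by
      unfold cwAngle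
      rw [← norm2pi_add_two_pi (a-b)]
      exact norm2pi_eq_self (by linarith) (by linarith)
    linarith
  · have h1 : cwAngle b a = a - b := norm2pi_eq_self (by linarith) (by linarith)
    have h2 : cwAngle a b = b - a + 2*π := by
      unfold cwAngle
      rw [← norm2pi_add_two_pi (b-a)]
      exact norm2pi_eq_self (by linarith) (by linarith)
    linarith

-- point at clockwise distance t from p
noncomputable def pt (p t : ℝ) : ℝ := norm2pi (p + t)

lemma pt_mem (p t : ℝ) : 0 ≤ pt p t ∧ pt p t < 2*π := ⟨norm2pi_nonneg _, norm2pi_lt _⟩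

lemma cw_pt (p : ℝ) {t : ℝ} (h0 : 0 ≤ t) (h1 : t < 2*π) : cwAngle p (pt p t) = t := by
  unfold cwAngle pt
  rw [show norm2pi (p+t) - p = norm2pi (p+t) + (-p) by ring, norm2pi_add_left,
    show p + t + -p = t by ring]
  exact norm2pi_eq_self h0 h1

lemma pt_cw {p x : ℝ} (hx0 : 0 ≤ x) (hx1 : x < 2*π) : pt p (cwAngle p x) = x := by
  unfold pt cwAngle
  rw [show p + norm2pi (x - p) = norm2pi (x-p) + p by ring, norm2pi_add_left,
    show x - p + p = x by ring]
  exact norm2pi_eq_self hx0 hx1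

lemma pt_inj {p t t' : ℝ} (h0 : 0 ≤ t) (h1 : t < 2*π) (h0' : 0 ≤ t') (h1' : t' < 2*π)
    (h : pt p t = pt p t') : t = t' := by
  rw [← cw_pt p h0 h1, ← cw_pt p h0' h1', h]

lemma pt_norm2pi (p t : ℝ) : pt p (norm2pi t) = pt p t := by
  unfold pt
  rw [show p + norm2pi t = norm2pi t + p by ring, norm2pi_add_left,
    show t + p = p + t by ring]

lemma cw_pt_general (p t : ℝ) : cwAngle p (pt p t) = norm2pi t := by
  rw [← pt_norm2pi]; exact cw_pt p (norm2pi_nonneg t) (norm2pi_lt t)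

lemma pt_pt (p t u : ℝ) : pt (pt p t) u = pt p (t + u) := by
  unfold pt
  rw [show norm2pi (p+t) + u = norm2pi (p+t) + u by rfl, norm2pi_add_left,
    show p + t + u = p + (t+u) by ring]

example : True := trivial
lemma antip_eq_pt (r : ℝ) : antip r = pt r π := rfl

lemma pi_mem : (0:ℝ) ≤ π ∧ π < 2*π := ⟨pi_pos.le, by linarith [pi_pos]⟩

lemma antip_mem (r : ℝ) : 0 ≤ antip r ∧ antip r < 2*π := pt_mem r π

lemma cw_antip (r : ℝ) : cwAngle r (antip r) = π := by
  rw [antip_eq_pt]; exact cw_pt r pi_mem.1 pi_mem.2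

lemma antip_ne {r : ℝ} (h0 : 0 ≤ r) (h1 : r < 2*π) : antip r ≠ r := by
  intro h
  have := cw_antip r
  rw [h] at this
  rw [(cw_eq_zero_iff h0 h1 h0 h1).mpr rfl] at this
  exact pi_ne_zero this.symm

lemma antip_antip {r : ℝ} (h0 : 0 ≤ r) (h1 : r < 2*π) : antip (antip r) = r := by
  rw [antip_eq_pt, antip_eq_pt, pt_pt]
  unfold pt
  rw [show r + (π + π) = r + 2*π by ring, norm2pi_add_two_pi]
  exact norm2pi_eq_self h0 h1

lemma cw_eq_pi_iff {r x : ℝ} (hx0 : 0 ≤ x) (hx1 : x < 2*π) :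
    cwAngle r x = π ↔ x = antip r := by
  constructor
  · intro h
    have := pt_cw (p := r) hx0 hx1
    rw [h] at this
    rw [← this, antip_eq_pt]
  · rintro rfl; exact cw_antip r

-- additivity
lemma cw_add (a b c : ℝ) : cwAngle a c = norm2pi (cwAngle a b + cwAngle b c) := by
  unfold cwAngle
  rw [show norm2pi (b - a) + norm2pi (c - b) = norm2pi (b-a) + norm2pi (c-b) from rfl]
  rw [norm2pi_add_left (b-a) (norm2pi (c-b)), show b - a + norm2pi (c - b) = norm2pi (c-b) + (b-a) by ring,
    norm2pi_add_left (c-b) (b-a), show c - b + (b - a) = c - a by ring]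

lemma cw_add_of_lt {a b c : ℝ} (h : cwAngle a b + cwAngle b c < 2*π) :
    cwAngle a c = cwAngle a b + cwAngle b c := by
  rw [cw_add a b c]
  exact norm2pi_eq_self (add_nonneg (cw_nonneg a b) (cw_nonneg b c)) h

-- ===== Dset and Beats =====
noncomputable def Dset (C : Finset ℝ) (p : ℝ) : Finset ℝ :=
  (C.erase p).image (fun x => cwAngle p x)

def Beats (D₁ D₂ : Finset ℝ) : Prop :=
  ∃ m, m ∈ D₁ ∧ m ∉ D₂ ∧ ∀ x, x < m → (x ∈ D₁ ↔ x ∈ D₂)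

lemma mem_Dset {C : Finset ℝ} (hC : OnCircle C) {p : ℝ} (hp0 : 0 ≤ p) (hp1 : p < 2*π)
    {t : ℝ} : t ∈ Dset C p ↔ (0 < t ∧ t < 2*π ∧ pt p t ∈ C) := by
  unfold Dset
  simp only [Finset.mem_image, Finset.mem_erase]
  constructor
  · rintro ⟨x, ⟨hxp, hxC⟩, rfl⟩
    obtain ⟨hx0, hx1⟩ := hC x hxC
    exact ⟨cw_pos hp0 hp1 hx0 hx1 (fun h => hxp h.symm), cw_lt p x, by rw [pt_cw hx0 hx1]; exact hxC⟩
  · rintro ⟨ht0, ht1, htC⟩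
    refine ⟨pt p t, ⟨?_, htC⟩, cw_pt p ht0.le ht1⟩
    intro h
    have := cw_pt p ht0.le ht1
    rw [h] at this
    rw [(cw_eq_zero_iff hp0 hp1 hp0 hp1).mpr rfl] at this
    exact absurd this.symm (ne_of_gt ht0)

lemma Dset_mem_Ioo {C : Finset ℝ} (hC : OnCircle C) {p : ℝ} (hp : p ∈ C)
    {t : ℝ} (ht : t ∈ Dset C p) : 0 < t ∧ t < 2*π := by
  obtain ⟨h0, h1, _⟩ := (mem_Dset hC (hC p hp).1 (hC p hp).2).mp ht
  exact ⟨h0, h1⟩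

lemma beats_asymm {D₁ D₂ : Finset ℝ} (h : Beats D₁ D₂) (h' : Beats D₂ D₁) : False := by
  obtain ⟨m, hm1, hm2, hag⟩ := h
  obtain ⟨m', hm1', hm2', hag'⟩ := h'
  rcases lt_trichotomy m m' with hlt | heq | hgt
  · exact hm2 ((hag' m hlt).mpr hm1)
  · exact hm2' (heq ▸ hm1)
  · exact hm2' ((hag m' hgt).mpr hm1')

lemma beats_irrefl (D : Finset ℝ) : ¬ Beats D D := by
  rintro ⟨m, h1, h2, _⟩; exact h2 h1

lemma beats_trans {D₁ D₂ D₃ : Finset ℝ} (h : Beats D₁ D₂) (h' : Beats D₂ D₃) :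
    Beats D₁ D₃ := by
  obtain ⟨m, hm1, hm2, hag⟩ := h
  obtain ⟨m', hm1', hm2', hag'⟩ := h'
  rcases lt_trichotomy m m' with hlt | heq | hgt
  · exact ⟨m, hm1, fun h => hm2 ((hag' m hlt).mpr h),
      fun x hx => (hag x hx).trans (hag' x (hx.trans hlt))⟩
  · exact absurd (heq ▸ hm1') hm2
  · exact ⟨m', (hag m' hgt).mpr hm1', hm2',
      fun x hx => (hag x (hx.trans hgt)).trans (hag' x hx)⟩

lemma beats_total {D₁ D₂ : Finset ℝ} (h : D₁ ≠ D₂) : Beats D₁ D₂ ∨ Beats D₂ D₁ := by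
  classical
  set Δ : Finset ℝ := (D₁ \ D₂) ∪ (D₂ \ D₁) with hΔ
  have hne : Δ.Nonempty := by
    by_contra hemp
    rw [Finset.not_nonempty_iff_eq_empty] at hemp
    apply h
    apply Finset.ext
    intro x
    constructor <;> intro hx <;> by_contra hx'
    · have : x ∈ Δ := by rw [hΔ]; simp [hx, hx']
      rw [hemp] at this; simp at this
    · have : x ∈ Δ := by rw [hΔ]; simp [hx, hx']
      rw [hemp] at this; simp at this
  set m := Δ.min' hne with hm
  have hmem : m ∈ Δ := Δ.min'_mem hne
  have hbelow : ∀ x, x < m → (x ∈ D₁ ↔ x ∈ D₂) := by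
    intro x hx
    by_contra hiff
    have hxΔ : x ∈ Δ := by
      rw [hΔ]; simp only [Finset.mem_union, Finset.mem_sdiff]
      by_cases h1 : x ∈ D₁
      · left; exact ⟨h1, fun h2 => hiff (iff_of_true h1 h2)⟩
      · right
        refine ⟨?_, h1⟩
        by_contra h2
        exact hiff (iff_of_false h1 h2)
    exact absurd (Δ.min'_le x hxΔ) (not_le.mpr hx)
  rw [hΔ] at hmem
  simp only [Finset.mem_union, Finset.mem_sdiff] at hmem
  rcases hmem with ⟨h1, h2⟩ | ⟨h1, h2⟩
  · exact Or.inl ⟨m, h1, h2, hbelow⟩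
  · exact Or.inr ⟨m, h1, h2, fun x hx => (hbelow x hx).symm⟩

-- ===== List lemmas: bridging ListLexLt with Beats =====

noncomputable def gapify (prev : ℝ) (l : List ℝ) (c : ℝ) : List ℝ :=
  List.zipWith (fun u v => u - v) (l ++ [c]) (prev :: l)

lemma gapify_nil (prev c : ℝ) : gapify prev [] c = [c - prev] := rfl

lemma gapify_cons (prev a c : ℝ) (t : List ℝ) :
    gapify prev (a :: t) c = (a - prev) :: gapify a t c := rfl

lemma lex_cons_inv {a b : ℝ} {l₁ l₂ : List ℝ}
    (h : List.Lex (· < ·) (a :: l₁) (b :: l₂)) :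
    a < b ∨ (a = b ∧ List.Lex (· < ·) l₁ l₂) := by
  cases h with
  | rel h => exact Or.inl h
  | cons h => exact Or.inr ⟨rfl, h⟩

lemma lex_cons_intro {a b : ℝ} {l₁ l₂ : List ℝ}
    (h : a < b ∨ (a = b ∧ List.Lex (· < ·) l₁ l₂)) :
    List.Lex (· < ·) (a :: l₁) (b :: l₂) := by
  rcases h with h | ⟨rfl, h⟩
  · exact List.Lex.rel h
  · exact List.Lex.cons h

lemma not_lex_nil {l : List ℝ} : ¬ List.Lex (· < ·) l [] := List.not_lex_nil

lemma gapify_lex (c : ℝ) : ∀ (l₁ l₂ : List ℝ) (prev : ℝ),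
    l₁.Pairwise (· < ·) → l₂.Pairwise (· < ·) →
    (∀ x ∈ l₁, prev < x) → (∀ x ∈ l₂, prev < x) →
    (∀ x ∈ l₁, x < c) → (∀ x ∈ l₂, x < c) → prev < c →
    (List.Lex (· < ·) (gapify prev l₁ c) (gapify prev l₂ c) ↔
      List.Lex (· < ·) (l₁ ++ [c]) (l₂ ++ [c])) := by
  intro l₁
  induction l₁ with
  | nil =>
    intro l₂ prev _ hs₂ _ hp₂ _ hb₂ hpc
    cases l₂ with
    | nil =>
      simp only [gapify_nil, List.nil_append]
      constructor <;> intro h <;> exfalso <;>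
        rcases lex_cons_inv h with h' | ⟨_, h'⟩ <;> [exact lt_irrefl _ h'; exact not_lex_nil h';
          exact lt_irrefl _ h'; exact not_lex_nil h']
    | cons b t₂ =>
      have hbc : b < c := hb₂ b (by simp)
      have hpb : prev < b := hp₂ b (by simp)
      simp only [gapify_nil, gapify_cons, List.nil_append, List.cons_append]
      constructor <;> intro h <;> exfalso <;> rcases lex_cons_inv h with h' | ⟨h', _⟩ <;> linarith
  | cons a t₁ ih =>
    intro l₂ prev hs₁ hs₂ hp₁ hp₂ hb₁ hb₂ hpc
    have hpa : prev < a := hp₁ a (by simp)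
    have hac : a < c := hb₁ a (by simp)
    rw [List.pairwise_cons] at hs₁
    cases l₂ with
    | nil =>
      simp only [gapify_nil, gapify_cons, List.nil_append, List.cons_append]
      constructor <;> intro _
      · exact List.Lex.rel (by linarith)
      · exact List.Lex.rel (by linarith)
    | cons b t₂ =>
      have hpb : prev < b := hp₂ b (by simp)
      rw [List.pairwise_cons] at hs₂
      simp only [gapify_cons, List.cons_append]
      constructor <;> intro h <;> rcases lex_cons_inv h with h' | ⟨h', h''⟩
      · exact List.Lex.rel (by linarith)
      · have hab : a = b := by linarith
        subst hab
        refine List.Lex.cons ?_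
        rw [← ih t₂ a hs₁.2 hs₂.2 hs₁.1 hs₂.1 (fun x hx => hb₁ x (by simp [hx]))
          (fun x hx => hb₂ x (by simp [hx])) hac]
        exact h''
      · exact List.Lex.rel (by linarith)
      · subst h'
        refine List.Lex.cons ?_
        rw [ih t₂ a hs₁.2 hs₂.2 hs₁.1 hs₂.1 (fun x hx => hb₁ x (by simp [hx]))
          (fun x hx => hb₂ x (by simp [hx])) hac]
        exact h''

lemma beats_insert {a : ℝ} {T₁ T₂ : Finset ℝ}
    (h₁ : ∀ x ∈ T₁, a < x) (h₂ : ∀ x ∈ T₂, a < x) :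
    Beats (insert a T₁) (insert a T₂) ↔ Beats T₁ T₂ := by
  have ha₁ : a ∉ T₁ := fun h => lt_irrefl a (h₁ a h)
  have ha₂ : a ∉ T₂ := fun h => lt_irrefl a (h₂ a h)
  constructor
  · rintro ⟨m, hm1, hm2, hag⟩
    have hma : m ≠ a := fun h => hm2 (h ▸ Finset.mem_insert_self a T₂)
    have hm1' : m ∈ T₁ := by
      rcases Finset.mem_insert.mp hm1 with h | h
      · exact absurd h hma
      · exact h
    refine ⟨m, hm1', fun h => hm2 (Finset.mem_insert_of_mem h), fun x hx => ?_⟩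
    have := hag x hx
    simp only [Finset.mem_insert] at this
    constructor <;> intro hmem
    · rcases this.mp (Or.inr hmem) with h | h
      · exact absurd (h ▸ hmem) ha₁
      · exact h
    · rcases this.mpr (Or.inr hmem) with h | h
      · exact absurd (h ▸ hmem) ha₂
      · exact h
  · rintro ⟨m, hm1, hm2, hag⟩
    have ham : a < m := h₁ m hm1
    refine ⟨m, Finset.mem_insert_of_mem hm1, ?_, fun x hx => ?_⟩
    · intro h
      rcases Finset.mem_insert.mp h with h | h
      · exact absurd h (ne_of_gt ham)
      · exact hm2 h
    · simp only [Finset.mem_insert]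
      by_cases hxa : x = a
      · simp [hxa]
      · simp only [hxa, false_or]
        exact hag x hx

lemma append_lex_beats (c : ℝ) : ∀ (l₁ l₂ : List ℝ),
    l₁.Pairwise (· < ·) → l₂.Pairwise (· < ·) →
    (∀ x ∈ l₁, x < c) → (∀ x ∈ l₂, x < c) →
    (List.Lex (· < ·) (l₁ ++ [c]) (l₂ ++ [c]) ↔ Beats l₁.toFinset l₂.toFinset) := by
  intro l₁
  induction l₁ with
  | nil =>
    intro l₂ _ hs₂ _ hb₂
    cases l₂ with
    | nil =>
      simp only [List.nil_append, List.toFinset_nil]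
      constructor <;> intro h
      · exfalso
        rcases lex_cons_inv h with h' | ⟨_, h'⟩
        · exact lt_irrefl _ h'
        · exact not_lex_nil h'
      · exact absurd h (beats_irrefl _)
    | cons b t₂ =>
      have hbc : b < c := hb₂ b (by simp)
      simp only [List.nil_append, List.cons_append, List.toFinset_nil]
      constructor <;> intro h
      · exfalso
        rcases lex_cons_inv h with h' | ⟨h', _⟩ <;> linarith
      · exfalso
        obtain ⟨m, hm1, _, _⟩ := h
        simp at hm1
  | cons a t₁ ih =>
    intro l₂ hs₁ hs₂ hb₁ hb₂
    have hac : a < c := hb₁ a (by simp)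
    rw [List.pairwise_cons] at hs₁
    cases l₂ with
    | nil =>
      simp only [List.nil_append, List.cons_append, List.toFinset_cons, List.toFinset_nil]
      constructor <;> intro _
      · refine ⟨a, Finset.mem_insert_self a _, by simp, fun x hx => ?_⟩
        simp only [Finset.mem_insert, List.mem_toFinset, Finset.notMem_empty, iff_false]
        rintro (rfl | hmem)
        · exact lt_irrefl x hx
        · exact absurd hx (not_lt.mpr (hs₁.1 x hmem).le)
      · exact List.Lex.rel hac
    | cons b t₂ =>
      have hbc : b < c := hb₂ b (by simp)
      rw [List.pairwise_cons] at hs₂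
      simp only [List.cons_append, List.toFinset_cons]
      rcases lt_trichotomy a b with hab | hab | hab
      · constructor <;> intro _
        · refine ⟨a, Finset.mem_insert_self a _, ?_, fun x hx => ?_⟩
          · simp only [Finset.mem_insert, List.mem_toFinset]
            rintro (rfl | hmem)
            · exact lt_irrefl a hab
            · exact absurd hab (not_lt.mpr (hs₂.1 a hmem).le)
          · simp only [Finset.mem_insert, List.mem_toFinset]
            constructor
            · rintro (rfl | hmem)
              · exact absurd hx (lt_irrefl x)
              · exact absurd hx (not_lt.mpr (hs₁.1 x hmem).le)
            · rintro (rfl | hmem)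
              · exact absurd hab (not_lt.mpr hx.le)
              · exact absurd (hx.trans hab) (not_lt.mpr (hs₂.1 x hmem).le)
        · exact List.Lex.rel hab
      · subst hab
        rw [beats_insert (fun x hx => hs₁.1 x (List.mem_toFinset.mp hx))
          (fun x hx => hs₂.1 x (List.mem_toFinset.mp hx))]
        rw [← ih t₂ hs₁.2 hs₂.2 (fun x hx => hb₁ x (by simp [hx]))
          (fun x hx => hb₂ x (by simp [hx]))]
        constructor <;> intro h
        · rcases lex_cons_inv h with h' | ⟨_, h''⟩
          · exact absurd h' (lt_irrefl a)
          · exact h''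
        · exact List.Lex.cons h
      · constructor <;> intro h <;> exfalso
        · rcases lex_cons_inv h with h' | ⟨h', _⟩ <;> linarith
        · obtain ⟨m, hm1, _, hag⟩ := h
          have hbm : b < m := by
            rcases Finset.mem_insert.mp hm1 with rfl | hmem
            · exact hab
            · exact hab.trans (hs₁.1 m (List.mem_toFinset.mp hmem))
          have hbT : b ∈ insert a t₁.toFinset := by
            rw [hag b hbm]
            exact Finset.mem_insert_self b _
          rcases Finset.mem_insert.mp hbT with rfl | hmem
          · exact lt_irrefl b hab
          · exact absurd hab (not_lt.mpr (hs₁.1 b (List.mem_toFinset.mp hmem)).le)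

theorem lex_iff_beats {C : Finset ℝ} (hC : OnCircle C) {p q : ℝ} (hp : p ∈ C) (hq : q ∈ C) :
    ListLexLt (angleSeq C p) (angleSeq C q) ↔ Beats (Dset C p) (Dset C q) := by
  have key : ∀ r ∈ C, angleSeq C r = gapify 0 ((Dset C r).sort (· ≤ ·)) (2*π) := by
    intro r _; rfl
  have hsorted : ∀ r, ((Dset C r).sort (· ≤ ·)).Pairwise (· < ·) := fun r =>
    List.sortedLT_iff_pairwise.mp (Finset.sortedLT_sort _)
  have hbound : ∀ r ∈ C, ∀ x ∈ (Dset C r).sort (· ≤ ·), 0 < x ∧ x < 2*π := by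
    intro r hr x hx
    exact Dset_mem_Ioo hC hr (Finset.mem_sort (α := ℝ) (· ≤ ·) |>.mp hx)
  rw [key p hp, key q hq, ListLexLt]
  rw [gapify_lex (2*π) _ _ 0 (hsorted p) (hsorted q)
    (fun x hx => (hbound p hp x hx).1) (fun x hx => (hbound q hq x hx).1)
    (fun x hx => (hbound p hp x hx).2) (fun x hx => (hbound q hq x hx).2) Real.two_pi_pos]
  rw [append_lex_beats (2*π) _ _ (hsorted p) (hsorted q)
    (fun x hx => (hbound p hp x hx).2) (fun x hx => (hbound q hq x hx).2)]
  rw [Finset.sort_toFinset, Finset.sort_toFinset]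

-- ===== Rotation from equal Dsets; leader existence and uniqueness =====

lemma rot_of_Dset_eq {C : Finset ℝ} (hC : OnCircle C) {p q : ℝ} (hp : p ∈ C) (hq : q ∈ C)
    (hne : p ≠ q) (h : Dset C p = Dset C q) : rotConf C (cwAngle q p) = C := by
  classical
  set θ := cwAngle q p with hθ
  have hfix : ∀ x ∈ C, norm2pi (x + θ) = pt p (cwAngle q x) := by
    intro x _
    unfold pt cwAngle
    rw [show x + θ = θ + x by ring, hθ]
    unfold cwAngle
    rw [norm2pi_add_left (p - q) x, show p + norm2pi (x - q) = norm2pi (x - q) + p by ring,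
      norm2pi_add_left (x - q) p, show p - q + x = x - q + p by ring]
  have hsub : rotConf C θ ⊆ C := by
    intro y hy
    unfold rotConf at hy
    obtain ⟨x, hx, rfl⟩ := Finset.mem_image.mp hy
    rw [hfix x hx]
    by_cases hxq : x = q
    · rw [hxq]
      rw [(cw_eq_zero_iff (hC q hq).1 (hC q hq).2 (hC q hq).1 (hC q hq).2).mpr rfl]
      unfold pt
      rw [add_zero]
      rw [norm2pi_eq_self (hC p hp).1 (hC p hp).2]
      exact hp
    · have hd : cwAngle q x ∈ Dset C q := by
        unfold Dset
        exact Finset.mem_image.mpr ⟨x, Finset.mem_erase.mpr ⟨hxq, hx⟩, rfl⟩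
      rw [← h] at hd
      obtain ⟨_, _, hmem⟩ := (mem_Dset hC (hC p hp).1 (hC p hp).2).mp hd
      exact hmem
  have hinj : Set.InjOn (fun x => norm2pi (x + θ)) C := by
    intro x hx y hy hxy
    simp only at hxy
    rw [hfix x hx, hfix y hy] at hxy
    have hx' := hC x hx
    have hy' := hC y hy
    have := pt_inj (cw_nonneg q x) (cw_lt q x) (cw_nonneg q y) (cw_lt q y) hxy
    have h1 := pt_cw (p := q) hx'.1 hx'.2
    have h2 := pt_cw (p := q) hy'.1 hy'.2
    rw [← h1, ← h2, this]
  have hcard : (rotConf C θ).card = C.card := Finset.card_image_of_injOn hinj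
  exact Finset.eq_of_subset_of_card_le hsub (le_of_eq hcard.symm)

lemma Dset_ne {C : Finset ℝ} (hC : OnCircle C) (hA : RotAsym C) {p q : ℝ}
    (hp : p ∈ C) (hq : q ∈ C) (hne : p ≠ q) : Dset C p ≠ Dset C q := by
  intro h
  have hθ : cwAngle q p ∈ Set.Ioo 0 (2*π) :=
    ⟨cw_pos (hC q hq).1 (hC q hq).2 (hC p hp).1 (hC p hp).2 (Ne.symm hne), cw_lt q p⟩
  exact hA _ hθ (rot_of_Dset_eq hC hp hq hne h)

lemma finset_exists_min {α : Type*} [DecidableEq α] (r : α → α → Prop)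
    (htrans : ∀ {a b c : α}, r a b → r b c → r a c) :
    ∀ (t : Finset α), t.Nonempty → (∀ p ∈ t, ∀ q ∈ t, p ≠ q → r p q ∨ r q p) →
    ∃ m ∈ t, ∀ q ∈ t, q ≠ m → r m q := by
  intro t
  induction t using Finset.induction_on with
  | empty => intro h; exact absurd h (by simp)
  | insert a t ha ih =>
    intro _ htot
    rcases t.eq_empty_or_nonempty with rfl | hne
    · exact ⟨a, by simp, by simp⟩
    · obtain ⟨m, hmt, hmin⟩ := ih hne (fun p hp q hq => htot p (Finset.mem_insert_of_mem hp) q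
        (Finset.mem_insert_of_mem hq))
      have ham : a ≠ m := fun h => ha (h ▸ hmt)
      by_cases hr : r a m
      · refine ⟨a, Finset.mem_insert_self a t, fun q hq hqa => ?_⟩
        rcases Finset.mem_insert.mp hq with rfl | hqt
        · exact absurd rfl hqa
        · by_cases hqm : q = m
          · exact hqm ▸ hr
          · exact htrans hr (hmin q hqt hqm)
      · have hma : r m a := by
          rcases htot a (Finset.mem_insert_self a t) m (Finset.mem_insert_of_mem hmt) ham with
            h | h
          · exact absurd h hr
          · exact h
        refine ⟨m, Finset.mem_insert_of_mem hmt, fun q hq hqm => ?_⟩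
        rcases Finset.mem_insert.mp hq with rfl | hqt
        · exact hma
        · exact hmin q hqt hqm

lemma exists_true_leader {C : Finset ℝ} (hC : OnCircle C) (hA : RotAsym C)
    (hne : C.Nonempty) : ∃ L, IsTrueLeader C L := by
  classical
  obtain ⟨m, hm, hmin⟩ := finset_exists_min (fun p q => Beats (Dset C p) (Dset C q))
    (fun {a b c} => beats_trans) C hne
    (fun p hp q hq hpq => by
      rcases beats_total (Dset_ne hC hA hp hq hpq) with h | h
      · exact Or.inl h
      · exact Or.inr h)
  exact ⟨m, hm, fun x hx hxm => (lex_iff_beats hC hm hx).mpr (hmin x hx hxm)⟩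

lemma leader_beats {C : Finset ℝ} (hC : OnCircle C) {L : ℝ} (hL : IsTrueLeader C L)
    {q : ℝ} (hq : q ∈ C) (hne : q ≠ L) : Beats (Dset C L) (Dset C q) :=
  (lex_iff_beats hC hL.1 hq).mp (hL.2 q hq hne)

lemma leader_unique {C : Finset ℝ} (hC : OnCircle C) {L r : ℝ} (hL : IsTrueLeader C L)
    (hr : IsTrueLeader C r) : L = r := by
  by_contra hne
  exact beats_asymm (leader_beats hC hL hr.1 (Ne.symm hne)) (leader_beats hC hr hL.1 hne)

-- ===== config membership helpers =====

lemma OnCircle_erase {C : Finset ℝ} (hC : OnCircle C) (z : ℝ) : OnCircle (C.erase z) :=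
  fun x hx => hC x (Finset.mem_of_mem_erase hx)

lemma OnCircle_insert {C : Finset ℝ} (hC : OnCircle C) {z : ℝ} (hz0 : 0 ≤ z) (hz1 : z < 2*π) :
    OnCircle (insert z C) := by
  intro x hx
  rcases Finset.mem_insert.mp hx with rfl | hx
  · exact ⟨hz0, hz1⟩
  · exact hC x hx

lemma norm2pi_sub_left (x y : ℝ) : norm2pi (x - norm2pi y) = norm2pi (x - y) := by
  obtain ⟨k, hk⟩ := norm2pi_sub_floor y
  rw [hk, show x - (y + 2*π*k) = (x - y) + 2*π*(-k : ℤ) by push_cast; ring, norm2pi_add_int]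

lemma cw_antip_of (q r : ℝ) : cwAngle q (antip r) = norm2pi (cwAngle q r + π) := by
  unfold cwAngle antip
  rw [show norm2pi (r + π) - q = norm2pi (r+π) + (-q) by ring, norm2pi_add_left,
    show r + π + -q = (r - q) + π by ring, ← norm2pi_add_left (r - q) π]

lemma cw_antip_of_lt {q r : ℝ} (h : cwAngle q r < π) :
    cwAngle q (antip r) = cwAngle q r + π := by
  rw [cw_antip_of]
  exact norm2pi_eq_self (by linarith [cw_nonneg q r, pi_pos]) (by linarith)

lemma cw_antip_of_gt {q r : ℝ} (h : π < cwAngle q r) :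
    cwAngle q (antip r) = cwAngle q r - π := by
  rw [cw_antip_of, show cwAngle q r + π = (cwAngle q r - π) + 2*π by ring, norm2pi_add_two_pi]
  exact norm2pi_eq_self (by linarith) (by linarith [cw_lt q r, pi_pos])

lemma antip_of_antip {q r : ℝ} (hq0 : 0 ≤ q) (hq1 : q < 2*π) (h : r = antip q) :
    q = antip r := by
  rw [h, antip_antip hq0 hq1]

lemma mem_Dset' {C : Finset ℝ} (hC : OnCircle C) {p : ℝ} (hp0 : 0 ≤ p) (hp1 : p < 2*π)
    {x : ℝ} (hx : x ∈ C) (hxp : x ≠ p) : cwAngle p x ∈ Dset C p := by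
  obtain ⟨hx0, hx1⟩ := hC x hx
  rw [mem_Dset hC hp0 hp1]
  exact ⟨cw_pos hp0 hp1 hx0 hx1 (fun h => hxp h.symm), cw_lt p x, by rw [pt_cw hx0 hx1]; exact hx⟩

lemma mem_Dset_erase {C : Finset ℝ} (hC : OnCircle C) {q z : ℝ}
    (hq0 : 0 ≤ q) (hq1 : q < 2*π) (hz0 : 0 ≤ z) (hz1 : z < 2*π) (hzq : z ≠ q) (t : ℝ) :
    t ∈ Dset (C.erase z) q ↔ (t ∈ Dset C q ∧ t ≠ cwAngle q z) := by
  rw [mem_Dset (OnCircle_erase hC z) hq0 hq1, mem_Dset hC hq0 hq1]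
  constructor
  · rintro ⟨ht0, ht1, htm⟩
    rw [Finset.mem_erase] at htm
    refine ⟨⟨ht0, ht1, htm.2⟩, fun h => htm.1 ?_⟩
    rw [h, pt_cw hz0 hz1]
  · rintro ⟨⟨ht0, ht1, htm⟩, hne⟩
    refine ⟨ht0, ht1, Finset.mem_erase.mpr ⟨?_, htm⟩⟩
    intro h
    apply hne
    rw [← h, cw_pt q ht0.le ht1]

-- ===== THE KEY REMOVAL LEMMA =====
lemma REM {C : Finset ℝ} (hC : OnCircle C) {r : ℝ} (hr : r ∈ C) (ha : antip r ∈ C)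
    (hlead : ∀ q ∈ C, q ≠ r → Beats (Dset C r) (Dset C q)) :
    ∀ q ∈ C.erase (antip r), q ≠ r →
      Beats (Dset (C.erase (antip r)) r) (Dset (C.erase (antip r)) q) := by
  intro q hq hqr
  obtain ⟨hr0, hr1⟩ := hC r hr
  have ha0 : 0 ≤ antip r := (antip_mem r).1
  have ha1 : antip r < 2*π := (antip_mem r).2
  have har : antip r ≠ r := antip_ne hr0 hr1
  have hqC : q ∈ C := Finset.mem_of_mem_erase hq
  have hqa : q ≠ antip r := (Finset.mem_erase.mp hq).1
  obtain ⟨hq0, hq1⟩ := hC q hqC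
  have hpiDr : π ∈ Dset C r := by
    rw [mem_Dset hC hr0 hr1]
    exact ⟨pi_pos, pi_mem.2, by rw [← antip_eq_pt]; exact ha⟩
  set u := cwAngle q (antip r) with hu
  have huDq : u ∈ Dset C q := mem_Dset' hC hq0 hq1 ha (fun h => hqa h.symm)
  have hupi : u ≠ π := by
    intro h
    have h1 : antip r = antip q := (cw_eq_pi_iff ha0 ha1).mp h
    have h2 : q = antip (antip r) := antip_of_antip hq0 hq1 h1
    rw [antip_antip hr0 hr1] at h2
    exact hqr h2
  have hcwra : cwAngle r (antip r) = π := cw_antip r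
  have hmemr : ∀ t, t ∈ Dset (C.erase (antip r)) r ↔ (t ∈ Dset C r ∧ t ≠ π) := by
    intro t
    rw [mem_Dset_erase hC hr0 hr1 ha0 ha1 har t, hcwra]
  have hmemq : ∀ t, t ∈ Dset (C.erase (antip r)) q ↔ (t ∈ Dset C q ∧ t ≠ u) := by
    intro t
    rw [mem_Dset_erase hC hq0 hq1 ha0 ha1 (fun h => hqa h.symm) t]
  obtain ⟨m, hm1, hm2, hag⟩ := hlead q hqC hqr
  obtain ⟨hm0, hm2π⟩ := Dset_mem_Ioo hC hr hm1
  have hmu : m ≠ u := fun h => hm2 (h ▸ huDq)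
  -- the two easy constructive cases
  have case_m : m < π → m < u → Beats (Dset (C.erase (antip r)) r) (Dset (C.erase (antip r)) q) := by
    intro hmpi hmu'
    refine ⟨m, (hmemr m).mpr ⟨hm1, ne_of_lt hmpi⟩, fun h => hm2 ((hmemq m).mp h).1,
      fun x hx => ?_⟩
    rw [hmemr x, hmemq x]
    constructor
    · rintro ⟨h1, _⟩
      exact ⟨(hag x hx).mp h1, ne_of_lt (hx.trans hmu')⟩
    · rintro ⟨h1, _⟩
      exact ⟨(hag x hx).mpr h1, ne_of_lt (hx.trans hmpi)⟩
  have case_u : u < π → u < m → Beats (Dset (C.erase (antip r)) r) (Dset (C.erase (antip r)) q) := by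
    intro hupi' hmu'
    refine ⟨u, (hmemr u).mpr ⟨(hag u hmu').mpr huDq, hupi⟩,
      fun h => ((hmemq u).mp h).2 rfl, fun x hx => ?_⟩
    rw [hmemr x, hmemq x]
    constructor
    · rintro ⟨h1, _⟩
      exact ⟨(hag x (hx.trans hmu')).mp h1, ne_of_lt hx⟩
    · rintro ⟨h1, _⟩
      exact ⟨(hag x (hx.trans hmu')).mpr h1, ne_of_lt (hx.trans hupi')⟩
  rcases lt_trichotomy u π with hupi' | hupi' | hupi'
  · rcases lt_or_gt_of_ne hmu with h | h
    · exact case_m (h.trans hupi') h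
    · exact case_u hupi' h
  · exact absurd hupi' hupi
  · rcases lt_or_ge m π with hmpi | hmpi
    · exact case_m hmpi (hmpi.trans hupi')
    · -- HARD CASE : π ≤ m, π < u : derive absurdity
      exfalso
      set c := cwAngle q r with hc
      have hc0 : 0 < c := cw_pos hq0 hq1 hr0 hr1 hqr
      have hc2π : c < 2*π := cw_lt q r
      have hcpi : c < π := by
        rcases lt_trichotomy c π with h | h | h
        · exact h
        · exfalso
          have : r = antip q := (cw_eq_pi_iff hr0 hr1).mp h
          have h2 : q = antip r := antip_of_antip hq0 hq1 this
          exact hqa h2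
        · exfalso
          have := cw_antip_of_gt (q := q) (r := r) h
          rw [← hu] at this
          linarith
      have hcm : c < m := lt_of_lt_of_le hcpi hmpi
      have hcDq : c ∈ Dset C q := mem_Dset' hC hq0 hq1 hr (fun h => hqr h.symm)
      have hcDr : c ∈ Dset C r := (hag c hcm).mpr hcDq
      -- the point x₁ = pt r c
      have hx₁C : pt r c ∈ C := ((mem_Dset hC hr0 hr1).mp hcDr).2.2
      obtain ⟨hx₁0, hx₁1⟩ := pt_mem r c
      have hx₁r : pt r c ≠ r := by
        intro h
        have h1 : cwAngle r (pt r c) = c := cw_pt r hc0.le hc2π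
        rw [h, (cw_eq_zero_iff hr0 hr1 hr0 hr1).mpr rfl] at h1
        exact absurd h1.symm (ne_of_gt hc0)
      have hrq : r = pt q c := (pt_cw hr0 hr1).symm
      have hymC : pt r m ∈ C := ((mem_Dset hC hr0 hr1).mp hm1).2.2
      have hqmC : pt q m ∉ C := by
        intro h
        exact hm2 ((mem_Dset hC hq0 hq1).mpr ⟨hm0, hm2π, h⟩)
      have hptq : ∀ t : ℝ, pt q (c + t) = pt r t := by
        intro t
        rw [hrq, pt_pt]
      have hptx : ∀ t : ℝ, pt (pt r c) t = pt r (c + t) := by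
        intro t
        rw [pt_pt]
      -- Beats (Dset C x₁) (Dset C r) with witness m - c
      have hB2 : Beats (Dset C (pt r c)) (Dset C r) := by
        refine ⟨m - c, ?_, ?_, ?_⟩
        · rw [mem_Dset hC hx₁0 hx₁1]
          refine ⟨by linarith, by linarith, ?_⟩
          rw [hptx, show c + (m - c) = m by ring]
          exact hymC
        · intro h
          have := ((mem_Dset hC hr0 hr1).mp h).2.2
          rw [show m - c = c + (m - c) - c by ring] at this
          rw [show (c + (m-c) - c) = m - c by ring] at this
          have h2 : pt r (m - c) = pt q m := by
            rw [← hptq (m - c), show c + (m - c) = m by ring]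
          rw [h2] at this
          exact hqmC this
        · intro x hx
          rcases le_or_gt x 0 with hx0 | hx0
          · constructor <;> intro h
            · exact absurd ((mem_Dset hC hx₁0 hx₁1).mp h).1 (not_lt.mpr hx0)
            · exact absurd ((mem_Dset hC hr0 hr1).mp h).1 (not_lt.mpr hx0)
          · have hx2π : x < 2*π := by linarith
            have hcx : c + x < m := by linarith
            have hcx0 : 0 < c + x := by linarith
            rw [mem_Dset hC hx₁0 hx₁1, mem_Dset hC hr0 hr1]
            have e1 : pt (pt r c) x ∈ C ↔ (c + x) ∈ Dset C r := by
              rw [hptx, mem_Dset hC hr0 hr1]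
              constructor
              · intro h; exact ⟨hcx0, by linarith, h⟩
              · intro h; exact h.2.2
            have e2 : (c + x) ∈ Dset C q ↔ pt r x ∈ C := by
              rw [mem_Dset hC hq0 hq1, hptq]
              constructor
              · intro h; exact h.2.2
              · intro h; exact ⟨hcx0, by linarith, h⟩
            constructor
            · rintro ⟨_, _, hmem⟩
              refine ⟨hx0, hx2π, ?_⟩
              exact e2.mp ((hag (c+x) hcx).mp (e1.mp hmem))
            · rintro ⟨_, _, hmem⟩
              refine ⟨hx0, hx2π, ?_⟩
              exact e1.mpr ((hag (c+x) hcx).mpr (e2.mpr hmem))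
      exact beats_asymm (hlead (pt r c) hx₁C hx₁r) hB2

-- ===== confused leader structure =====

lemma confused_pattern {s : Finset ℝ} (hcirc : OnCircle s) {r : ℝ} (h : ConfusedLeader s r) :
    IsTrueLeader (confC0 s r) r ∧ ¬ IsTrueLeader (confC1 s r) r := by
  obtain ⟨hrs, hA0, hA1, hxor⟩ := h
  obtain ⟨hr0, hr1⟩ := hcirc r hrs
  have himp : IsTrueLeader (confC1 s r) r → IsTrueLeader (confC0 s r) r := by
    intro hL1
    have hC1circ : OnCircle (confC1 s r) :=
      OnCircle_insert hcirc (antip_mem r).1 (antip_mem r).2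
    have hrC1 : r ∈ confC1 s r := Finset.mem_insert_of_mem hrs
    have haC1 : antip r ∈ confC1 s r := Finset.mem_insert_self _ _
    have hlead : ∀ q ∈ confC1 s r, q ≠ r →
        Beats (Dset (confC1 s r) r) (Dset (confC1 s r) q) :=
      fun q hq hqr => (lex_iff_beats hC1circ hrC1 hq).mp (hL1.2 q hq hqr)
    have hREM := REM hC1circ hrC1 haC1 hlead
    have hE : (confC1 s r).erase (antip r) = confC0 s r := by
      unfold confC1 confC0
      exact Finset.erase_insert_eq_erase _ _
    rw [hE] at hREM
    have hC0circ : OnCircle (confC0 s r) := OnCircle_erase hcirc _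
    have hrC0 : r ∈ confC0 s r :=
      Finset.mem_erase.mpr ⟨fun h' => antip_ne hr0 hr1 h'.symm, hrs⟩
    exact ⟨hrC0, fun q hq hqr =>
      (lex_iff_beats hC0circ hrC0 hq).mpr (hREM q hq hqr)⟩
  rcases hxor with ⟨hA, hB⟩ | ⟨hB, hA⟩
  · exact ⟨hA, hB⟩
  · exact absurd (himp hB) hA

lemma antip_mem_of_confused {s : Finset ℝ} (hcirc : OnCircle s) {L r : ℝ}
    (hL : IsTrueLeader s L) (h : ConfusedLeader s r) (hne : r ≠ L) : antip r ∈ s := by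
  by_contra ha
  have h0 := (confused_pattern hcirc h).1
  have hE : confC0 s r = s := by
    unfold confC0
    exact Finset.erase_eq_of_notMem ha
  rw [hE] at h0
  exact hne (leader_unique hcirc hL h0).symm

lemma antip_not_mem_of_confused_leader {s : Finset ℝ} (hcirc : OnCircle s) {L : ℝ}
    (hL : IsTrueLeader s L) (h : ConfusedLeader s L) : antip L ∉ s := by
  intro ha
  have h1 := (confused_pattern hcirc h).2
  have hE : confC1 s L = s := by
    unfold confC1
    exact Finset.insert_eq_self.mpr ha
  rw [hE] at h1
  exact h1 hL

lemma confused_far {s : Finset ℝ} (hcirc : OnCircle s) {L r : ℝ}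
    (hL : IsTrueLeader s L) (h : ConfusedLeader s r) (hne : r ≠ L) : π ≤ cwAngle L r := by
  by_contra hlt
  push_neg at hlt
  have hrs := h.1
  have hLs := hL.1
  obtain ⟨hr0, hr1⟩ := hcirc r hrs
  obtain ⟨hL0, hL1⟩ := hcirc L hLs
  have ha : antip r ∈ s := antip_mem_of_confused hcirc hL h hne
  have hpat := (confused_pattern hcirc h).1
  have hc0 : 0 < cwAngle L r := cw_pos hL0 hL1 hr0 hr1 (fun h' => hne h'.symm)
  have hv : cwAngle L (antip r) = cwAngle L r + π := cw_antip_of_lt hlt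
  have haL : antip r ≠ L := by
    intro h'
    rw [h', (cw_eq_zero_iff hL0 hL1 hL0 hL1).mpr rfl] at hv
    linarith [pi_pos]
  have har : antip r ≠ r := antip_ne hr0 hr1
  have hpiDr : π ∈ Dset s r := by
    rw [mem_Dset hcirc hr0 hr1]
    exact ⟨pi_pos, pi_mem.2, by rw [← antip_eq_pt]; exact ha⟩
  obtain ⟨m, hm1, hm2, hag⟩ := leader_beats hcirc hL hrs hne
  have hC0circ : OnCircle (confC0 s r) := OnCircle_erase hcirc _
  have hLC0 : L ∈ confC0 s r := Finset.mem_erase.mpr ⟨fun h' => haL h'.symm, hLs⟩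
  have hB' : Beats (Dset (confC0 s r) r) (Dset (confC0 s r) L) :=
    leader_beats hC0circ hpat hLC0 (fun h' => hne h'.symm)
  have hmemr : ∀ t, t ∈ Dset (confC0 s r) r ↔ (t ∈ Dset s r ∧ t ≠ π) := by
    intro t
    have : confC0 s r = s.erase (antip r) := rfl
    rw [this, mem_Dset_erase hcirc hr0 hr1 (antip_mem r).1 (antip_mem r).2 har t, cw_antip r]
  have hmemL : ∀ t, t ∈ Dset (confC0 s r) L ↔ (t ∈ Dset s L ∧ t ≠ cwAngle L r + π) := by
    intro t
    have : confC0 s r = s.erase (antip r) := rfl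
    rw [this, mem_Dset_erase hcirc hL0 hL1 (antip_mem r).1 (antip_mem r).2 haL t, hv]
  rcases lt_trichotomy m π with hmpi | hmpi | hmpi
  · have hBop : Beats (Dset (confC0 s r) L) (Dset (confC0 s r) r) := by
      refine ⟨m, (hmemL m).mpr ⟨hm1, by linarith⟩, fun h' => hm2 ((hmemr m).mp h').1,
        fun x hx => ?_⟩
      rw [hmemL x, hmemr x]
      constructor
      · rintro ⟨h1, _⟩
        exact ⟨(hag x hx).mp h1, by linarith⟩
      · rintro ⟨h1, _⟩
        exact ⟨(hag x hx).mpr h1, by linarith⟩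
    exact beats_asymm hB' hBop
  · exact hm2 (hmpi ▸ hpiDr)
  · have hpiDL : π ∈ Dset s L := (hag π hmpi).mpr hpiDr
    have hBop : Beats (Dset (confC0 s r) L) (Dset (confC0 s r) r) := by
      refine ⟨π, (hmemL π).mpr ⟨hpiDL, by linarith⟩, fun h' => ((hmemr π).mp h').2 rfl,
        fun x hx => ?_⟩
      rw [hmemL x, hmemr x]
      constructor
      · rintro ⟨h1, _⟩
        exact ⟨(hag x (hx.trans hmpi)).mp h1, ne_of_lt hx⟩
      · rintro ⟨h1, _⟩
        exact ⟨(hag x (hx.trans hmpi)).mpr h1, by linarith⟩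
    exact beats_asymm hB' hBop

lemma far_position {s : Finset ℝ} (hcirc : OnCircle s) {L r n : ℝ}
    (hL : IsTrueLeader s L) (h : ConfusedLeader s r) (hne : r ≠ L)
    (hn : IsCwNeighbor s r n) :
    0 < cwAngle (antip L) n ∧ cwAngle (antip L) n ≤ π ∧
      cwAngle (antip L) n = (cwAngle L r - π) + cwAngle r n := by
  have hrs := h.1
  have hLs := hL.1
  obtain ⟨hr0, hr1⟩ := hcirc r hrs
  obtain ⟨hL0, hL1⟩ := hcirc L hLs
  obtain ⟨hn0, hn1⟩ := hcirc n hn.1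
  have hcge : π ≤ cwAngle L r := confused_far hcirc hL h hne
  have hc2π : cwAngle L r < 2*π := cw_lt L r
  have h1 : cwAngle (antip L) r = cwAngle L r - π := by
    have e : cwAngle (antip L) r = norm2pi (cwAngle L r - π) := by
      unfold cwAngle antip
      rw [norm2pi_sub_left r (L + π),
        show r - (L + π) = (r - L) + (-π) by ring, ← norm2pi_add_left (r - L) (-π),
        show norm2pi (r - L) + -π = norm2pi (r - L) - π by ring]
    rw [e]
    exact norm2pi_eq_self (by linarith) (by linarith [pi_pos])
  have hg0 : 0 < cwAngle r n := cw_pos hr0 hr1 hn0 hn1 (fun h' => hn.2.1 h'.symm)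
  have hgle : cwAngle r n ≤ cwAngle r L := hn.2.2 L hLs (fun h' => hne h'.symm)
  have htot : cwAngle L r + cwAngle r L = 2*π := cw_total hL0 hL1 hr0 hr1 (fun h' => hne h'.symm)
  have hsum : cwAngle (antip L) r + cwAngle r n < 2*π := by
    rw [h1]
    linarith [pi_pos]
  have hadd := cw_add_of_lt hsum
  rw [h1] at hadd
  refine ⟨?_, ?_, hadd⟩
  · rw [hadd]; linarith
  · rw [hadd]; linarith

lemma main_case_L {s : Finset ℝ} (hcirc : OnCircle s) {L r n nL : ℝ}
    (hL : IsTrueLeader s L) (hconfL : ConfusedLeader s L) (hconf : ConfusedLeader s r)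
    (hrL : r ≠ L) (hn : IsCwNeighbor s r n) (hnL : IsCwNeighbor s L nL)
    (heq : antip n = nL) : False := by
  have hrs := hconf.1
  have hLs := hL.1
  obtain ⟨hr0, hr1⟩ := hcirc r hrs
  obtain ⟨hL0, hL1⟩ := hcirc L hLs
  obtain ⟨ht0, htle, hteq⟩ := far_position hcirc hL hconf hrL hn
  have hanotin : antip L ∉ s := antip_not_mem_of_confused_leader hcirc hL hconfL
  have hcne : cwAngle L r ≠ π := by
    intro h'
    have : r = antip L := (cw_eq_pi_iff hr0 hr1).mp h'
    exact hanotin (this ▸ hrs)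
  have hcgt : π < cwAngle L r := lt_of_le_of_ne (confused_far hcirc hL hconf hrL) (Ne.symm hcne)
  have h2 : cwAngle L n = norm2pi (π + cwAngle (antip L) n) := by
    rw [cw_add L (antip L) n, cw_antip L]
  have h5 : cwAngle L nL = cwAngle (antip L) n := by
    rw [← heq, cw_antip_of L n, h2, norm2pi_add_left,
      show π + cwAngle (antip L) n + π = cwAngle (antip L) n + 2*π by ring,
      norm2pi_add_two_pi]
    exact norm2pi_eq_self ht0.le (by linarith [pi_pos])
  have hgt : cwAngle r n < cwAngle L nL := by
    rw [h5, hteq]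
    linarith
  obtain ⟨m, hm1, hm2, hag⟩ := leader_beats hcirc hL hrs hrL
  have hminL : ∀ e ∈ Dset s L, cwAngle L nL ≤ e := by
    intro e he
    obtain ⟨he0, he1, hemem⟩ := (mem_Dset hcirc hL0 hL1).mp he
    have hneL : pt L e ≠ L := by
      intro h'
      have h1' : cwAngle L (pt L e) = e := cw_pt L he0.le he1
      rw [h', (cw_eq_zero_iff hL0 hL1 hL0 hL1).mpr rfl] at h1'
      exact absurd h1'.symm (ne_of_gt he0)
    have := hnL.2.2 (pt L e) hemem hneL
    rwa [cw_pt L he0.le he1] at this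
  have hgDr : cwAngle r n ∈ Dset s r := mem_Dset' hcirc hr0 hr1 hn.1 hn.2.1
  have hmge : cwAngle L nL ≤ m := hminL m hm1
  have hinL : cwAngle r n ∈ Dset s L := (hag _ (lt_of_lt_of_le hgt hmge)).mpr hgDr
  exact absurd (hminL _ hinL) (not_le.mpr hgt)

/-- the first clockwise neighbors of two distinct confused leaders are
not antipodal to each other. -/
theorem confused_leaders_neighbors_not_antipodal
    (s : Finset ℝ) (hcirc : OnCircle s) (hasym : RotAsym s)
    (r₁ r₂ : ℝ) (h₁ : ConfusedLeader s r₁) (h₂ : ConfusedLeader s r₂)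
    (hne : r₁ ≠ r₂)
    (n₁ n₂ : ℝ) (hn₁ : IsCwNeighbor s r₁ n₁) (hn₂ : IsCwNeighbor s r₂ n₂) :
    antip n₁ ≠ n₂ := by
  intro heq
  obtain ⟨L, hL⟩ := exists_true_leader hcirc hasym ⟨r₁, h₁.1⟩
  obtain ⟨hn₁0, hn₁1⟩ := hcirc n₁ hn₁.1
  by_cases h1L : r₁ = L
  · -- r₁ is the leader; use the asymmetric-case lemma with r := r₂
    have h2L : r₂ ≠ L := fun h' => hne (h1L.trans h'.symm)
    have heq' : antip n₂ = n₁ := by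
      rw [← heq, antip_antip hn₁0 hn₁1]
    subst h1L
    exact main_case_L hcirc hL h₁ h₂ h2L hn₂ hn₁ heq'
  · by_cases h2L : r₂ = L
    · subst h2L
      exact main_case_L hcirc hL h₂ h₁ h1L hn₁ hn₂ heq
    · -- both confused leaders are distinct from the leader: half-circle argument
      obtain ⟨ht10, ht1le, _⟩ := far_position hcirc hL h₁ h1L hn₁
      obtain ⟨ht20, ht2le, _⟩ := far_position hcirc hL h₂ h2L hn₂
      have hcw12 : cwAngle n₁ n₂ = π := by
        rw [← heq]
        exact cw_antip n₁
      have hkey : cwAngle (antip L) n₂ = norm2pi (cwAngle (antip L) n₁ + π) := by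
        rw [cw_add (antip L) n₁ n₂, hcw12]
      rcases lt_or_eq_of_le ht1le with hlt | heqpi
      · rw [norm2pi_eq_self (by linarith [pi_pos]) (by linarith)] at hkey
        linarith
      · rw [heqpi, show π + π = 2*π by ring, norm2pi_two_pi] at hkey
        linarith
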